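/- Let (λ_n)_{n∈ℕ} ∈ Λ, let d ∈ ℕ, let D ⊆ ℝ^d be a compact convex set, and let f : D → ℝ₊ be nonnegative. Then the inequality f(∑_{i=1}^∞ λ_i x_i) ≤ ∑_{i=1}^∞ λ_i f(x_i) holds for all sequences x_i ∈ D, i ∈ ℕ, if and only if f is convex. -/

import Mathlib

open Filter Topology Set

section Helpers

/-- Greedy accumulator for subset sums of `lam (· + 1)` aiming at `u`. -/
private noncomputable def gAcc (lam : ℕ → ℝ) (u : ℝ) : ℕ → ℝ
  | 0 => 0
  | n + 1 => gAcc lam u n + (if gAcc lam u n + lam (n + 1) ≤ u then lam (n + 1) else 0)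

private lemma lam_summable {lam : ℕ → ℝ} (hsum : HasSum lam 1) : Summable lam := ⟨1, hsum⟩

private lemma tail_sum_eq {lam : ℕ → ℝ} (hsum : HasSum lam 1) (n : ℕ) :
    ∑' i, lam (i + n) = 1 - ∑ i ∈ Finset.range n, lam i := by
  have h := Summable.sum_add_tsum_nat_add (f := lam) n (lam_summable hsum)
  rw [hsum.tsum_eq] at h
  linarith

private lemma partial_sum_lt_one {lam : ℕ → ℝ} (hpos : ∀ n, 0 < lam n) (hsum : HasSum lam 1)
    (n : ℕ) : ∑ i ∈ Finset.range n, lam i < 1 := by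
  have htail := tail_sum_eq hsum n
  have hsm : Summable fun i => lam (i + n) := ((summable_nat_add_iff n).2 (lam_summable hsum))
  have h0 : lam (0 + n) ≤ ∑' i, lam (i + n) :=
    Summable.le_tsum hsm 0 (fun j _ => (hpos _).le)
  have := hpos (0 + n)
  linarith

private lemma lam0_lt_one {lam : ℕ → ℝ} (hpos : ∀ n, 0 < lam n) (hsum : HasSum lam 1) :
    lam 0 < 1 := by
  have h := partial_sum_lt_one hpos hsum 1
  simpa using h

/-- The greedy lemma: any `u ∈ [0,1]` is within `lam 0` above a subset sum of the `lam (i+1)`. -/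
private lemma greedy_lemma {lam : ℕ → ℝ} (hpos : ∀ n, 0 < lam n) (hanti : Antitone lam)
    (hsum : HasSum lam 1) {u : ℝ} (hu0 : 0 ≤ u) (hu1 : u ≤ 1) :
    ∃ ε : ℕ → ℝ, (∀ i, ε i = 0 ∨ ε i = 1) ∧
      0 ≤ u - ∑' i, lam (i + 1) * ε i ∧ u - ∑' i, lam (i + 1) * ε i ≤ lam 0 := by
  classical
  set ε : ℕ → ℝ := fun i => if gAcc lam u i + lam (i + 1) ≤ u then 1 else 0 with hε
  have hεcases : ∀ i, ε i = 0 ∨ ε i = 1 := by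
    intro i
    by_cases h : gAcc lam u i + lam (i + 1) ≤ u <;> simp [hε, h]
  have hterm : ∀ i, lam (i + 1) * ε i = gAcc lam u (i + 1) - gAcc lam u i := by
    intro i
    simp only [hε, gAcc]
    split <;> ring
  have haccle : ∀ n, gAcc lam u n ≤ u := by
    intro n
    induction n with
    | zero => simpa [gAcc] using hu0
    | succ n ih =>
      simp only [gAcc]
      split <;> [skip; simpa using ih]
      · next h => linarith
  have haccmono : ∀ n, gAcc lam u n ≤ gAcc lam u (n + 1) := by
    intro n
    simp only [gAcc]
    split <;> [linarith [(hpos (n+1)).le]; simp]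
  have hpartial : ∀ n, ∑ i ∈ Finset.range n, lam (i + 1) * ε i = gAcc lam u n := by
    intro n
    induction n with
    | zero => simp [gAcc]
    | succ n ih => rw [Finset.sum_range_succ, ih, hterm]; ring
  have hnonneg : ∀ i, 0 ≤ lam (i + 1) * ε i := by
    intro i
    rcases hεcases i with h | h <;> simp [h, (hpos (i + 1)).le]
  have hle : ∀ i, lam (i + 1) * ε i ≤ lam (i + 1) := by
    intro i
    rcases hεcases i with h | h <;> simp [h, (hpos (i + 1)).le]
  have hsm : Summable fun i => lam (i + 1) * ε i :=
    Summable.of_nonneg_of_le hnonneg hle ((summable_nat_add_iff 1).2 (lam_summable hsum))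
  set σ := ∑' i, lam (i + 1) * ε i with hσ
  have hσle : σ ≤ u := by
    apply Real.tsum_le_of_sum_range_le hnonneg
    intro n; rw [hpartial]; exact haccle n
  refine ⟨ε, hεcases, by linarith, ?_⟩
  show u - σ ≤ lam 0
  by_cases hall : ∀ n, gAcc lam u n + lam (n + 1) ≤ u
  · have hε1 : ∀ i, ε i = 1 := by intro i; simp [hε, hall i]
    have hσeq : σ = 1 - lam 0 := by
      have h2 : σ = ∑' i, lam (i + 1) := tsum_congr fun i => by rw [hε1 i, mul_one]
      have h3 : ∑' i, lam (i + 1) = 1 - ∑ i ∈ Finset.range 1, lam i := tail_sum_eq hsum 1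
      simp only [Finset.range_one, Finset.sum_singleton] at h3
      rw [h2, h3]
    rw [hσeq]; linarith
  · push_neg at hall
    obtain ⟨n, hn⟩ := hall
    have h1 : gAcc lam u n ≤ σ := by
      rw [← hpartial n]
      exact Summable.sum_le_tsum (Finset.range n) (fun i _ => hnonneg i) hsm
    have h2 : lam (n + 1) ≤ lam 0 := hanti (Nat.zero_le _)
    linarith

/-- tail of the series -/
private noncomputable def tau (lam : ℕ → ℝ) (n : ℕ) : ℝ := 1 - ∑ i ∈ Finset.range n, lam i

private lemma tau_zero (lam : ℕ → ℝ) : tau lam 0 = 1 := by simp [tau]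

private lemma tau_succ (lam : ℕ → ℝ) (n : ℕ) : tau lam (n + 1) = tau lam n - lam n := by
  simp [tau, Finset.sum_range_succ]; ring

private lemma tau_pos {lam : ℕ → ℝ} (hpos : ∀ n, 0 < lam n) (hsum : HasSum lam 1) (n : ℕ) :
    0 < tau lam n := by
  have := partial_sum_lt_one hpos hsum n
  simp [tau]; linarith

private lemma tau_tendsto {lam : ℕ → ℝ} (hsum : HasSum lam 1) :
    Tendsto (tau lam) atTop (𝓝 0) := by
  have h := hsum.tendsto_sum_nat
  have : Tendsto (fun n => 1 - ∑ i ∈ Finset.range n, lam i) atTop (𝓝 (1 - 1)) :=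
    tendsto_const_nhds.sub h
  rw [show tau lam = fun n => 1 - ∑ i ∈ Finset.range n, lam i from rfl]
  simpa using this

end Helpers

set_option maxHeartbeats 1000000 in
theorem stmt_2 (lam : ℕ → ℝ) (hpos : ∀ n, 0 < lam n) (hanti : Antitone lam)
    (hsum : HasSum lam 1) (d : ℕ) (D : Set (EuclideanSpace ℝ (Fin d)))
    (hcomp : IsCompact D) (hconv : Convex ℝ D) (f : EuclideanSpace ℝ (Fin d) → ℝ)
    (hf0 : ∀ x ∈ D, 0 ≤ f x) :
    (∀ x : ℕ → EuclideanSpace ℝ (Fin d), (∀ i, x i ∈ D) →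
      ENNReal.ofReal (f (∑' i, lam i • x i)) ≤ ∑' i, ENNReal.ofReal (lam i * f (x i))) ↔
      ConvexOn ℝ D f := by
  have hlamsm : Summable lam := ⟨1, hsum⟩
  constructor
  · -- hard direction: the infinite Jensen inequality implies convexity
    intro hJ
    refine ⟨hconv, ?_⟩
    intro x hx y hy a b ha hb hab
    -- the set of good parameters
    set Z : Set ℝ :=
      {t | t ∈ Set.Icc (0:ℝ) 1 ∧ f (t • x + (1 - t) • y) ≤ t * f x + (1 - t) * f y} with hZ
    have hZ0 : (0:ℝ) ∈ Z := by
      constructor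
      · exact ⟨le_refl 0, zero_le_one⟩
      · simp
    have hZ1 : (1:ℝ) ∈ Z := by
      constructor
      · exact ⟨zero_le_one, le_refl 1⟩
      · simp
    -- the closure property of Z under countable lam-combinations
    have hclose : ∀ w : ℕ → ℝ, (∀ i, w i ∈ Z) → (∑' i, lam i * w i) ∈ Z := by
      intro w hw
      have hw0 : ∀ i, 0 ≤ w i := fun i => (hw i).1.1
      have hw1 : ∀ i, w i ≤ 1 := fun i => (hw i).1.2
      have hsmlw : Summable fun i => lam i * w i :=
        Summable.of_nonneg_of_le (fun i => mul_nonneg (hpos i).le (hw0 i))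
          (fun i => mul_le_of_le_one_right (hpos i).le (hw1 i)) hlamsm
      set u := ∑' i, lam i * w i with hu
      have hU : HasSum (fun i => lam i * w i) u := hsmlw.hasSum
      have hu0 : 0 ≤ u := tsum_nonneg fun i => mul_nonneg (hpos i).le (hw0 i)
      have hu1 : u ≤ 1 := by
        have h := Summable.tsum_le_tsum (fun i => mul_le_of_le_one_right (hpos i).le (hw1 i)) hsmlw hlamsm
        rw [hsum.tsum_eq] at h
        exact h
      set p : ℕ → EuclideanSpace ℝ (Fin d) := fun i => w i • x + (1 - w i) • y with hp
      have hpD : ∀ i, p i ∈ D := fun i =>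
        hconv hx hy (hw0 i) (by linarith [hw1 i]) (by ring)
      have happ := hJ p hpD
      have hfun : (fun i => lam i • p i)
          = fun i => (lam i * w i) • x + (lam i - lam i * w i) • y := by
        funext i
        simp only [hp, smul_add, smul_smul]
        congr 2
        ring
      have hV : HasSum (fun i => lam i • p i) (u • x + (1 - u) • y) := by
        rw [hfun]
        exact (hU.smul_const x).add ((hsum.sub hU).smul_const y)
      rw [hV.tsum_eq] at happ
      have hb : ∀ i, lam i * f (p i) ≤ lam i * (w i * f x + (1 - w i) * f y) :=
        fun i => mul_le_mul_of_nonneg_left (hw i).2 (hpos i).le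
      have hstep1 : (∑' i, ENNReal.ofReal (lam i * f (p i))) ≤
          ∑' i, ENNReal.ofReal (lam i * (w i * f x + (1 - w i) * f y)) :=
        ENNReal.tsum_le_tsum fun i => ENNReal.ofReal_le_ofReal (hb i)
      have hfx := hf0 x hx
      have hfy := hf0 y hy
      have hbnn : ∀ i, 0 ≤ lam i * (w i * f x + (1 - w i) * f y) := by
        intro i
        have h1 : 0 ≤ w i * f x := mul_nonneg (hw0 i) hfx
        have h2 : 0 ≤ (1 - w i) * f y := mul_nonneg (by linarith [hw1 i]) hfy
        exact mul_nonneg (hpos i).le (by linarith)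
      have hBsum : HasSum (fun i => lam i * (w i * f x + (1 - w i) * f y))
          (u * f x + (1 - u) * f y) := by
        have hfun2 : (fun i => lam i * (w i * f x + (1 - w i) * f y))
            = fun i => (lam i * w i) * f x + (lam i - lam i * w i) * f y := by
          funext i; ring
        rw [hfun2]
        exact (hU.mul_right (f x)).add ((hsum.sub hU).mul_right (f y))
      have hstep2 : (∑' i, ENNReal.ofReal (lam i * (w i * f x + (1 - w i) * f y)))
          = ENNReal.ofReal (u * f x + (1 - u) * f y) := by
        rw [← hBsum.tsum_eq, ← ENNReal.ofReal_tsum_of_nonneg hbnn hBsum.summable]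
      have hfinal := le_trans happ (le_trans hstep1 (le_of_eq hstep2))
      have htgt : 0 ≤ u * f x + (1 - u) * f y := by
        have h1 : 0 ≤ u * f x := mul_nonneg hu0 hfx
        have h2 : 0 ≤ (1 - u) * f y := mul_nonneg (by linarith) hfy
        linarith
      exact ⟨⟨hu0, hu1⟩, (ENNReal.ofReal_le_ofReal_iff htgt).1 hfinal⟩
    -- Z is dense in [0,1]
    have hdense : ∀ u ∈ Set.Icc (0:ℝ) 1, ∀ δ : ℝ, 0 < δ → ∃ z ∈ Z, |u - z| ≤ δ := by
      have hkey : ∀ k : ℕ, ∀ u ∈ Set.Icc (0:ℝ) 1, ∃ z ∈ Z, |u - z| ≤ lam 0 ^ k := by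
        intro k
        induction k with
        | zero =>
          intro u hu
          refine ⟨0, hZ0, ?_⟩
          rw [sub_zero, pow_zero, abs_of_nonneg hu.1]
          exact hu.2
        | succ k ih =>
          intro u hu
          obtain ⟨ε, hεc, hres0, hres1⟩ := greedy_lemma hpos hanti hsum hu.1 hu.2
          set σ := ∑' i, lam (i + 1) * ε i with hσdef
          set u' := (u - σ) / lam 0 with hu'def
          have hu'mem : u' ∈ Set.Icc (0:ℝ) 1 := by
            constructor
            · exact div_nonneg (by linarith) (hpos 0).le
            · rw [hu'def, div_le_one (hpos 0)]; linarith
          obtain ⟨z', hz'Z, hz'⟩ := ih u' hu'mem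
          set s : ℕ → ℝ := fun i => Nat.casesOn i z' ε with hs
          have hsZ : ∀ i, s i ∈ Z := by
            intro i
            cases i with
            | zero => exact hz'Z
            | succ n => rcases hεc n with h | h <;> · simp only [hs]; rw [h]; first | exact hZ0 | exact hZ1
          refine ⟨∑' i, lam i * s i, hclose s hsZ, ?_⟩
          have hsm2 : Summable fun i => lam i * s i :=
            Summable.of_nonneg_of_le
              (fun i => mul_nonneg (hpos i).le (hsZ i).1.1)
              (fun i => mul_le_of_le_one_right (hpos i).le (hsZ i).1.2) hlamsm
          have hsplit : (∑' i, lam i * s i) = lam 0 * z' + σ := by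
            rw [Summable.tsum_eq_zero_add hsm2]
            rfl
          have habs : u - (lam 0 * z' + σ) = lam 0 * (u' - z') := by
            have h0 := (hpos 0).ne'
            rw [hu'def]
            field_simp
            ring
          rw [hsplit, habs, abs_mul, abs_of_nonneg (hpos 0).le, pow_succ]
          calc lam 0 * |u' - z'| ≤ lam 0 * lam 0 ^ k :=
                mul_le_mul_of_nonneg_left hz' (hpos 0).le
            _ = lam 0 ^ k * lam 0 := by ring
      intro u hu δ hδ
      obtain ⟨k, hk⟩ := exists_pow_lt_of_lt_one hδ (lam0_lt_one hpos hsum)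
      obtain ⟨z, hzZ, hz⟩ := hkey k u hu
      exact ⟨z, hzZ, hz.trans hk.le⟩
    -- Z is everything
    have hfull : ∀ u ∈ Set.Icc (0:ℝ) 1, u ∈ Z := by
      intro u hu
      have hstep : ∀ n : ℕ, ∀ r : ℝ, 0 ≤ r → r ≤ tau lam n →
          ∃ z, z ∈ Z ∧ (0 ≤ r - lam n * z ∧ r - lam n * z ≤ tau lam (n + 1)) := by
        intro n r hr0 hr1
        by_cases hA : r ≤ tau lam (n + 1)
        · exact ⟨0, hZ0, by simpa using hr0, by simpa using hA⟩
        · push_neg at hA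
          have htau' := tau_pos hpos hsum (n + 1)
          have htaun := tau_succ lam n
          by_cases hB : r = tau lam n
          · refine ⟨1, hZ1, ?_, ?_⟩ <;> rw [hB, mul_one] <;> linarith
          · have hrlt : r < tau lam n := lt_of_le_of_ne hr1 hB
            set lo := (r - tau lam (n + 1)) / lam n with hlo
            set hi := min (r / lam n) 1 with hhi
            have hlo_pos : 0 < lo := div_pos (by linarith) (hpos n)
            have hlo_lt1 : lo < 1 := by
              rw [hlo, div_lt_one (hpos n)]; linarith
            have hlo_lt_hi : lo < hi := by
              apply lt_min _ hlo_lt1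
              rw [hlo, div_lt_div_iff₀ (hpos n) (hpos n)]
              nlinarith [hpos n]
            have hhi_le1 : hi ≤ 1 := min_le_right _ _
            have hmid : (lo + hi) / 2 ∈ Set.Icc (0:ℝ) 1 := by
              constructor <;> [linarith; linarith]
            obtain ⟨z, hzZ, hz⟩ := hdense ((lo + hi) / 2) hmid ((hi - lo) / 2) (by linarith)
            have hzabs := abs_le.1 hz
            have hz_lo : lo ≤ z := by
              have := hzabs.2; linarith
            have hz_hi : z ≤ hi := by
              have := hzabs.1; linarith
            refine ⟨z, hzZ, ?_, ?_⟩
            · have h1 : z ≤ r / lam n := le_trans hz_hi (min_le_left _ _)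
              have h2 : z * lam n ≤ r := (le_div_iff₀ (hpos n)).1 h1
              nlinarith
            · have h2 : r - tau lam (n + 1) ≤ z * lam n := (div_le_iff₀ (hpos n)).1 hz_lo
              nlinarith
      let chain : ∀ n : ℕ, {r : ℝ // 0 ≤ r ∧ r ≤ tau lam n} := fun n =>
        Nat.rec (motive := fun n => {r : ℝ // 0 ≤ r ∧ r ≤ tau lam n})
          ⟨u, hu.1, by rw [tau_zero]; exact hu.2⟩
          (fun n p =>
            ⟨p.1 - lam n * Classical.choose (hstep n p.1 p.2.1 p.2.2),
             (Classical.choose_spec (hstep n p.1 p.2.1 p.2.2)).2⟩) n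
      let w : ℕ → ℝ := fun n =>
        Classical.choose (hstep n (chain n).1 (chain n).2.1 (chain n).2.2)
      have hchain0 : (chain 0).1 = u := rfl
      have hchain_succ : ∀ n, (chain (n + 1)).1 = (chain n).1 - lam n * w n := fun n => rfl
      have hwZ : ∀ n, w n ∈ Z := fun n =>
        (Classical.choose_spec (hstep n (chain n).1 (chain n).2.1 (chain n).2.2)).1
      have hpartial : ∀ n, ∑ i ∈ Finset.range n, lam i * w i = u - (chain n).1 := by
        intro n
        induction n with
        | zero => rw [Finset.sum_range_zero, hchain0]; ring
        | succ n ih => rw [Finset.sum_range_succ, ih, hchain_succ]; ring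
      have hrtend : Tendsto (fun n => (chain n).1) atTop (𝓝 0) :=
        squeeze_zero (fun n => (chain n).2.1) (fun n => (chain n).2.2) (tau_tendsto hsum)
      have hwsm : Summable fun i => lam i * w i :=
        Summable.of_nonneg_of_le (fun i => mul_nonneg (hpos i).le (hwZ i).1.1)
          (fun i => mul_le_of_le_one_right (hpos i).le (hwZ i).1.2) hlamsm
      have htends : Tendsto (fun n => ∑ i ∈ Finset.range n, lam i * w i) atTop (𝓝 u) := by
        have heq : (fun n => ∑ i ∈ Finset.range n, lam i * w i) = fun n => u - (chain n).1 :=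
          funext hpartial
        rw [heq]
        simpa using tendsto_const_nhds.sub hrtend
      have hU : (∑' i, lam i * w i) = u :=
        tendsto_nhds_unique hwsm.hasSum.tendsto_sum_nat htends
      have hm := hclose w hwZ
      rwa [hU] at hm
    have hmem : a ∈ Z := hfull a ⟨ha, by linarith⟩
    have h1 : (1:ℝ) - a = b := by linarith
    have := hmem.2
    rwa [h1] at this
  · -- easy (but still nontrivial) direction: convexity implies the inequality
    intro hcx x hx
    by_cases htop : (∑' i, ENNReal.ofReal (lam i * f (x i))) = ⊤
    · rw [htop]; exact le_top
    have hfxnn : ∀ i, 0 ≤ lam i * f (x i) := fun i => mul_nonneg (hpos i).le (hf0 _ (hx i))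
    have hsumfx : Summable fun i => lam i * f (x i) := by
      have h1 : (∑' i, ((lam i * f (x i)).toNNReal : ENNReal)) ≠ ⊤ := htop
      have h2 : Summable fun i => (lam i * f (x i)).toNNReal :=
        ENNReal.tsum_coe_ne_top_iff_summable.1 h1
      have h3 := NNReal.summable_coe.2 h2
      exact h3.congr fun i => Real.coe_toNNReal _ (hfxnn i)
    set L := ∑' i, lam i * f (x i) with hL
    have hLnn : 0 ≤ L := tsum_nonneg hfxnn
    have hRHS : (∑' i, ENNReal.ofReal (lam i * f (x i))) = ENNReal.ofReal L :=
      (ENNReal.ofReal_tsum_of_nonneg hfxnn hsumfx).symm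
    rw [hRHS]
    apply ENNReal.ofReal_le_ofReal
    -- real goal : f (∑' i, lam i • x i) ≤ L
    obtain ⟨C, hC⟩ := hcomp.isBounded.exists_norm_le
    have hxsm : Summable fun i => lam i • x i := by
      apply Summable.of_norm_bounded (g := fun i => lam i * C) (hlamsm.mul_right C)
      intro i
      rw [norm_smul, Real.norm_eq_abs, abs_of_nonneg (hpos i).le]
      exact mul_le_mul_of_nonneg_left (hC _ (hx i)) (hpos i).le
    set z := ∑' i, lam i • x i with hzdef
    have hz : HasSum (fun i => lam i • x i) z := hxsm.hasSum
    set S : ℕ → ℝ := fun N => ∑ i ∈ Finset.range (N + 1), lam i with hS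
    have hSpos : ∀ N, 0 < S N := by
      intro N
      have h1 : lam 0 ≤ S N :=
        Finset.single_le_sum (f := lam) (fun i _ => (hpos i).le)
          (Finset.mem_range.2 (Nat.succ_pos N))
      linarith [hpos 0]
    set wN : ℕ → EuclideanSpace ℝ (Fin d) :=
      fun N => (S N)⁻¹ • ∑ i ∈ Finset.range (N + 1), lam i • x i with hwN
    have hwNJ : ∀ N, f (wN N) ≤ (S N)⁻¹ * L := by
      intro N
      have hcm : wN N = Finset.centerMass (Finset.range (N + 1)) lam x := rfl
      have h1 := hcx.map_centerMass_le (t := Finset.range (N + 1)) (w := lam) (p := x)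
        (fun i _ => (hpos i).le) (hSpos N) (fun i _ => hx i)
      rw [← hcm] at h1
      have h2 : (Finset.range (N + 1)).centerMass lam (f ∘ x)
          = (S N)⁻¹ * ∑ i ∈ Finset.range (N + 1), lam i * f (x i) := by
        simp [Finset.centerMass, smul_eq_mul]
        exact Or.inl rfl
      have h3 : ∑ i ∈ Finset.range (N + 1), lam i * f (x i) ≤ L :=
        Summable.sum_le_tsum (Finset.range (N + 1)) (fun i _ => hfxnn i) hsumfx
      rw [h2] at h1
      calc f (wN N) ≤ (S N)⁻¹ * ∑ i ∈ Finset.range (N + 1), lam i * f (x i) := h1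
        _ ≤ (S N)⁻¹ * L := by
            apply mul_le_mul_of_nonneg_left h3
            exact inv_nonneg.2 (hSpos N).le
    have hStend : Tendsto S atTop (𝓝 1) := by
      have h0 := hsum.tendsto_sum_nat
      exact h0.comp (tendsto_add_atTop_nat 1)
    have hwNz : Tendsto wN atTop (𝓝 z) := by
      have hP : Tendsto (fun N => ∑ i ∈ Finset.range (N + 1), lam i • x i) atTop (𝓝 z) :=
        hz.tendsto_sum_nat.comp (tendsto_add_atTop_nat 1)
      have hSt : Tendsto (fun N => (S N)⁻¹) atTop (𝓝 1) := by
        have h2 := hStend.inv₀ one_ne_zero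
        simpa using h2
      have h3 := hSt.smul hP
      simpa using h3
    have hLlim : Tendsto (fun N => (S N)⁻¹ * L) atTop (𝓝 L) := by
      have h2 := (hStend.inv₀ one_ne_zero).mul_const L
      simpa using h2
    -- the chart into the spanned subspace
    set a : ℕ → EuclideanSpace ℝ (Fin d) := fun i => x i - z with ha
    set V : Submodule ℝ (EuclideanSpace ℝ (Fin d)) := Submodule.span ℝ (Set.range a) with hV
    set abar : ℕ → V := fun i => ⟨a i, Submodule.subset_span ⟨i, rfl⟩⟩ with habar
    set SS : Set V := {v | z + (v : EuclideanSpace ℝ (Fin d)) ∈ D} with hSS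
    have hcombo : ∀ (v w : V) (α β : ℝ), α + β = 1 →
        z + ((α • v + β • w : V) : EuclideanSpace ℝ (Fin d))
          = α • (z + (v : EuclideanSpace ℝ (Fin d))) + β • (z + (w : EuclideanSpace ℝ (Fin d))) := by
      intro v w α β hαβ
      have hc : ((α • v + β • w : V) : EuclideanSpace ℝ (Fin d))
          = α • (v : EuclideanSpace ℝ (Fin d)) + β • (w : EuclideanSpace ℝ (Fin d)) := by
        push_cast
        ring_nf
      rw [hc, smul_add, smul_add]
      have hz1 : α • z + β • z = z := by
        rw [← add_smul, hαβ, one_smul]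
      calc z + (α • (v : EuclideanSpace ℝ (Fin d)) + β • (w : EuclideanSpace ℝ (Fin d)))
          = (α • z + β • z) + (α • (v : EuclideanSpace ℝ (Fin d))
            + β • (w : EuclideanSpace ℝ (Fin d))) := by rw [hz1]
        _ = α • z + α • (v : EuclideanSpace ℝ (Fin d))
            + (β • z + β • (w : EuclideanSpace ℝ (Fin d))) := by abel
    have hSSconv : Convex ℝ SS := by
      intro v hv w hw α β hα hβ hαβ
      show z + ((α • v + β • w : V) : EuclideanSpace ℝ (Fin d)) ∈ D
      rw [hcombo v w α β hαβ]
      exact hconv hv hw hα hβ hαβ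
    set F : V → ℝ := fun v => f (z + (v : EuclideanSpace ℝ (Fin d))) with hF
    have hFcx : ConvexOn ℝ SS F := by
      refine ⟨hSSconv, ?_⟩
      intro v hv w hw α β hα hβ hαβ
      show f (z + ((α • v + β • w : V) : EuclideanSpace ℝ (Fin d))) ≤ α * F v + β * F w
      rw [hcombo v w α β hαβ]
      exact hcx.2 hv hw hα hβ hαβ
    have hza : HasSum (fun i => lam i • a i) 0 := by
      have h1 := hz.sub (hsum.smul_const z)
      simp only [one_smul, sub_self] at h1
      have h2 : (fun i => lam i • x i - lam i • z) = fun i => lam i • a i := by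
        funext i
        rw [ha]
        rw [smul_sub]
      rwa [h2] at h1
    have hsmV : Summable fun i => lam i • abar i := by
      apply Summable.of_norm_bounded (g := fun i => lam i * (C + ‖z‖))
        (hlamsm.mul_right _)
      intro i
      have hai : ‖a i‖ ≤ C + ‖z‖ := by
        calc ‖x i - z‖ ≤ ‖x i‖ + ‖z‖ := norm_sub_le _ _
          _ ≤ C + ‖z‖ := by have := hC _ (hx i); linarith
      have hnorm : ‖lam i • abar i‖ = lam i * ‖a i‖ := by
        rw [norm_smul, Real.norm_eq_abs, abs_of_nonneg (hpos i).le]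
        rfl
      rw [hnorm]
      exact mul_le_mul_of_nonneg_left hai (hpos i).le
    have key0 : HasSum (fun i => lam i • abar i) 0 := by
      have hT := hsmV.hasSum
      have hcoe : HasSum (fun i => ((lam i • abar i : V) : EuclideanSpace ℝ (Fin d)))
          ((∑' i, lam i • abar i : V) : EuclideanSpace ℝ (Fin d)) :=
        V.subtypeL.hasSum hT
      have h2 : HasSum (fun i => lam i • a i)
          ((∑' i, lam i • abar i : V) : EuclideanSpace ℝ (Fin d)) := hcoe
      have h3 : ((∑' i, lam i • abar i : V) : EuclideanSpace ℝ (Fin d)) = 0 :=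
        h2.unique hza
      have h4 : (∑' i, lam i • abar i : V) = 0 := by
        exact_mod_cast h3
      rwa [h4] at hT
    have key0' : HasSum (fun i => lam i • (abar 0 - abar i)) (abar 0) := by
      have h1 : HasSum (fun i => lam i • abar 0) ((1:ℝ) • abar 0) := hsum.smul_const (abar 0)
      have h2 := h1.sub key0
      simp only [one_smul, sub_zero] at h2
      have h3 : (fun i => lam i • abar 0 - lam i • abar i)
          = fun i => lam i • (abar 0 - abar i) := by
        funext i; rw [smul_sub]
      rwa [h3] at h2
    have hsub_span : Submodule.span ℝ (Set.range abar) = ⊤ := by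
      have hpre : Set.range abar = ((↑) : V → EuclideanSpace ℝ (Fin d)) ⁻¹' (Set.range a) := by
        ext v
        constructor
        · rintro ⟨i, rfl⟩; exact ⟨i, rfl⟩
        · rintro ⟨i, hi⟩
          exact ⟨i, Subtype.ext hi⟩
      rw [hpre, hV]
      exact Submodule.span_span_coe_preimage
    have habar0mem : abar 0 ∈ vectorSpan ℝ (Set.range abar) := by
      have hclosed : IsClosed ((vectorSpan ℝ (Set.range abar) : Submodule ℝ V) : Set V) :=
        Submodule.closed_of_finiteDimensional _
      have hterms : ∀ n, ∑ i ∈ Finset.range n, lam i • (abar 0 - abar i)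
          ∈ vectorSpan ℝ (Set.range abar) := by
        intro n
        apply Submodule.sum_mem
        intro i _
        apply Submodule.smul_mem
        have h5 : abar 0 -ᵥ abar i ∈ vectorSpan ℝ (Set.range abar) :=
          vsub_mem_vectorSpan ℝ ⟨0, rfl⟩ ⟨i, rfl⟩
        simpa using h5
      exact hclosed.mem_of_tendsto key0'.tendsto_sum_nat (Filter.Eventually.of_forall hterms)
    have hvs : vectorSpan ℝ (Set.range abar) = ⊤ := by
      rw [eq_top_iff, ← hsub_span, Submodule.span_le]
      rintro v ⟨i, rfl⟩
      have h1 : abar i -ᵥ abar 0 ∈ vectorSpan ℝ (Set.range abar) :=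
        vsub_mem_vectorSpan ℝ ⟨i, rfl⟩ ⟨0, rfl⟩
      have h2 := Submodule.add_mem _ h1 habar0mem
      simpa using h2
    have habarSS : ∀ i, abar i ∈ SS := by
      intro i
      show z + ((abar i : V) : EuclideanSpace ℝ (Fin d)) ∈ D
      have h1 : z + a i = x i := by simp [ha]
      have h2 : ((abar i : V) : EuclideanSpace ℝ (Fin d)) = a i := rfl
      rw [h2, h1]
      exact hx i
    have haffSS : affineSpan ℝ SS = ⊤ := by
      have h1 : affineSpan ℝ (Set.range abar) = ⊤ := by
        have hne' : ((affineSpan ℝ (Set.range abar) : Set V)).Nonempty :=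
          ⟨abar 0, subset_affineSpan ℝ _ ⟨0, rfl⟩⟩
        rw [← AffineSubspace.direction_eq_top_iff_of_nonempty hne', direction_affineSpan]
        exact hvs
      have h2 : affineSpan ℝ (Set.range abar) ≤ affineSpan ℝ SS :=
        affineSpan_mono ℝ (fun v hv => by obtain ⟨i, rfl⟩ := hv; exact habarSS i)
      rw [eq_top_iff, ← h1]
      exact h2
    have h0SS : (0 : V) ∈ interior SS := by
      by_contra h0
      obtain ⟨y₀, hy₀⟩ := (hSSconv.interior_nonempty_iff_affineSpan_eq_top).2 haffSS
      obtain ⟨ℓ, hℓ⟩ := geometric_hahn_banach_open_point (hSSconv.interior) isOpen_interior h0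
      have hy₀ℓ : ℓ y₀ < 0 := by
        have := hℓ y₀ hy₀
        simpa using this
      have hSSle : ∀ v ∈ SS, ℓ v ≤ 0 := by
        intro v hv
        by_contra hposv
        push_neg at hposv
        set c := ℓ y₀ with hc
        set t0 := (-c) / (-c + ℓ v) with ht0
        have hden : 0 < -c + ℓ v := by linarith
        have ht00 : 0 < t0 := div_pos (by linarith) hden
        have ht01 : t0 < 1 := by rw [ht0, div_lt_one hden]; linarith
        have hmem : (1 - t0) • y₀ + t0 • v ∈ interior SS := by
          apply hSSconv.openSegment_interior_closure_subset_interior hy₀ (subset_closure hv)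
          exact ⟨1 - t0, t0, by linarith, ht00, by ring, rfl⟩
        have hlt := hℓ _ hmem
        rw [map_zero] at hlt
        rw [map_add, map_smul, map_smul] at hlt
        simp only [smul_eq_mul] at hlt
        have hzero : (1 - t0) * c + t0 * ℓ v = 0 := by
          rw [ht0]
          field_simp
          ring
        linarith
      have hℓabar : ∀ i, ℓ (abar i) ≤ 0 := fun i => hSSle _ (habarSS i)
      have hsumℓ : HasSum (fun i => lam i * ℓ (abar i)) 0 := by
        have h1 := ℓ.hasSum key0
        simp only [map_smul, smul_eq_mul, map_zero] at h1
        exact h1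
      have hall0 : ∀ i, ℓ (abar i) = 0 := by
        intro i
        have h0' : HasSum (fun j => -(lam j * ℓ (abar j))) 0 := by
          simpa using hsumℓ.neg
        have hnn : ∀ j, 0 ≤ -(lam j * ℓ (abar j)) := fun j =>
          neg_nonneg.2 (mul_nonpos_of_nonneg_of_nonpos (hpos j).le (hℓabar j))
        have hle2 : -(lam i * ℓ (abar i)) ≤ 0 := by
          have h5 := Summable.le_tsum h0'.summable i (fun j _ => hnn j)
          rwa [h0'.tsum_eq] at h5
        have h6 := hnn i
        have h7 : lam i * ℓ (abar i) = 0 := by linarith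
        rcases mul_eq_zero.1 h7 with h | h
        · exact absurd h (hpos i).ne'
        · exact h
      have hℓ0 : ∀ v : V, ℓ v = 0 := by
        intro v
        have hv : v ∈ Submodule.span ℝ (Set.range abar) := by rw [hsub_span]; trivial
        induction hv using Submodule.span_induction with
        | mem w hw => obtain ⟨i, rfl⟩ := hw; exact hall0 i
        | zero => simp
        | add u v hu hv hu' hv' => rw [map_add, hu', hv']; ring
        | smul c u hu hu' => rw [map_smul, smul_eq_mul, hu']; ring
      have := hℓ0 y₀
      linarith
    have hcontF : ContinuousAt F 0 :=
      hFcx.continuousOn_interior.continuousAt (isOpen_interior.mem_nhds h0SS)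
    have hvmem : ∀ N, wN N - z ∈ V := by
      intro N
      have h1 : wN N = ∑ i ∈ Finset.range (N + 1), ((S N)⁻¹ * lam i) • x i := by
        show (S N)⁻¹ • (∑ i ∈ Finset.range (N + 1), lam i • x i)
            = ∑ i ∈ Finset.range (N + 1), ((S N)⁻¹ * lam i) • x i
        rw [Finset.smul_sum]
        exact Finset.sum_congr rfl fun i _ => (smul_smul _ _ _)
      have hz' : (∑ i ∈ Finset.range (N + 1), ((S N)⁻¹ * lam i) • z) = z := by
        rw [← Finset.sum_smul]
        have h2 : ∑ i ∈ Finset.range (N + 1), (S N)⁻¹ * lam i = 1 := by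
          rw [← Finset.mul_sum]
          exact inv_mul_cancel₀ (hSpos N).ne'
        rw [h2, one_smul]
      have h3 : wN N - z = ∑ i ∈ Finset.range (N + 1), ((S N)⁻¹ * lam i) • a i := by
        rw [h1]
        nth_rewrite 1 [← hz']
        rw [← Finset.sum_sub_distrib]
        refine Finset.sum_congr rfl fun i _ => ?_
        rw [ha, smul_sub]
      rw [h3]
      apply Submodule.sum_mem
      intro i _
      exact Submodule.smul_mem _ _ (Submodule.subset_span ⟨i, rfl⟩)
    set vN : ℕ → V := fun N => ⟨wN N - z, hvmem N⟩ with hvN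
    have hvN0 : Tendsto vN atTop (𝓝 0) := by
      rw [tendsto_zero_iff_norm_tendsto_zero]
      have h1 : (fun N => ‖vN N‖) = fun N => ‖wN N - z‖ := rfl
      rw [h1]
      rw [← tendsto_iff_norm_sub_tendsto_zero]
      exact hwNz
    have hlimF : Tendsto (fun N => f (wN N)) atTop (𝓝 (f z)) := by
      have h2 := hcontF.tendsto.comp hvN0
      have h3 : (F ∘ vN) = fun N => f (wN N) := by
        funext N
        show f (z + (wN N - z)) = f (wN N)
        congr 1
        abel
      have h4 : F 0 = f z := by
        show f (z + (0:V)) = f z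
        simp
      rw [h3, h4] at h2
      exact h2
    exact le_of_tendsto_of_tendsto' hlimF hLlim hwNJ
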